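/- Let Ω = {x ∈ R^n : x^L ≤ x ≤ x^U} with x^L_i < x^U_i for all i, let x ∈ Ω and α > 0. Define α_{−i} := min(α, x_i − x^L_i) and α_i := min(α, x^U_i − x_i), and D := ∪_{i=1}^n {−α_{−i} e_i, α_i e_i}. Then D is a Λ-PSS for B(x,α) ∩ Ω with Λ = min(n, √n·α / min{α, min over i with x_i ≠ x^L_i of (x_i − x^L_i), min over i with x_i ≠ x^U_i of (x^U_i − x_i)}). -/

import Mathlib

open RealInnerProductSpace

lemma euclid_abs_coord_le_norm {n : ℕ} (v : EuclideanSpace ℝ (Fin n)) (i : Fin n) :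
    |v i| ≤ ‖v‖ := by
  rw [EuclideanSpace.norm_eq, ← Real.sqrt_sq_eq_abs]
  apply Real.sqrt_le_sqrt
  simp only [Real.norm_eq_abs, sq_abs]
  exact Finset.single_le_sum (f := fun j => v j ^ 2) (fun j _ => sq_nonneg _) (Finset.mem_univ i)

lemma euclid_sum_abs_le {n : ℕ} (v : EuclideanSpace ℝ (Fin n)) :
    ∑ i, |v i| ≤ Real.sqrt n * ‖v‖ := by
  have h := Finset.sum_mul_sq_le_sq_mul_sq Finset.univ (fun i => |v i|) (fun _ => (1:ℝ))
  simp only [mul_one, one_pow, sq_abs, Finset.sum_const, Finset.card_univ,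
    Fintype.card_fin, nsmul_eq_mul, mul_one] at h
  have hnn : 0 ≤ ∑ i, |v i| := Finset.sum_nonneg fun i _ => abs_nonneg _
  have hnorm : ‖v‖ = Real.sqrt (∑ i, v i ^ 2) := by
    rw [EuclideanSpace.norm_eq]; simp [sq_abs]
  rw [hnorm, ← Real.sqrt_mul (Nat.cast_nonneg n), ← Real.sqrt_sq hnn]
  apply Real.sqrt_le_sqrt
  calc (∑ i, |v i|) ^ 2 ≤ (∑ i, v i ^ 2) * n := h
    _ = n * ∑ i, v i ^ 2 := mul_comm _ _

/-- Bound constraints: the set D = ∪ᵢ {−α₋ᵢ eᵢ, αᵢ eᵢ} with α₋ᵢ = min(α, xᵢ−xᵢᴸ),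
αᵢ = min(α, xᵢᵁ−xᵢ) is a Λ-PSS for B(x,α) ∩ Ω with
Λ = min(n, √n·α / min{α, minᵢ:xᵢ≠xᵢᴸ (xᵢ−xᵢᴸ), minᵢ:xᵢ≠xᵢᵁ (xᵢᵁ−xᵢ)}). -/
theorem bound_constraints_lambda_pss (n : ℕ)
    (xL xU : Fin n → ℝ) (hLU : ∀ i, xL i < xU i)
    (Ω : Set (EuclideanSpace ℝ (Fin n)))
    (hΩ : Ω = {y : EuclideanSpace ℝ (Fin n) | ∀ i, xL i ≤ y i ∧ y i ≤ xU i})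
    (x : EuclideanSpace ℝ (Fin n)) (hx : x ∈ Ω) (α : ℝ) (hα : 0 < α)
    (αneg αpos : Fin n → ℝ)
    (hαneg : ∀ i, αneg i = min α (x i - xL i))
    (hαpos : ∀ i, αpos i = min α (xU i - x i))
    (δ : ℝ)
    (hδ : δ = sInf ({α} ∪ {t : ℝ | ∃ i, x i ≠ xL i ∧ t = x i - xL i}
      ∪ {t : ℝ | ∃ i, x i ≠ xU i ∧ t = xU i - x i}))
    (Λ : ℝ) (hΛ : Λ = min (n : ℝ) (Real.sqrt n * α / δ)) :
    (∀ i, x + αpos i • (EuclideanSpace.single i (1:ℝ)) ∈ Ω ∧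
      x + (-(αneg i • (EuclideanSpace.single i (1:ℝ)))) ∈ Ω) ∧
    (∀ v : EuclideanSpace ℝ (Fin n), x + v ∈ Ω → ‖v‖ ≤ α →
      ∃ cpos cneg : Fin n → ℝ, (∀ i, 0 ≤ cpos i) ∧ (∀ i, 0 ≤ cneg i) ∧
        v = (∑ i, cpos i • (αpos i • (EuclideanSpace.single i (1:ℝ))))
            + ∑ i, cneg i • (-(αneg i • (EuclideanSpace.single i (1:ℝ)))) ∧
        ∑ i, (cpos i + cneg i) ≤ Λ) := by
  subst hΩ
  simp only [Set.mem_setOf_eq] at hx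
  have hxL : ∀ i, xL i ≤ x i := fun i => (hx i).1
  have hxU : ∀ i, x i ≤ xU i := fun i => (hx i).2
  have hαposnn : ∀ i, 0 ≤ αpos i := fun i => by
    rw [hαpos]; exact le_min hα.le (sub_nonneg.2 (hxU i))
  have hαnegnn : ∀ i, 0 ≤ αneg i := fun i => by
    rw [hαneg]; exact le_min hα.le (sub_nonneg.2 (hxL i))
  -- the set S defining δ
  set S : Set ℝ := {α} ∪ {t : ℝ | ∃ i, x i ≠ xL i ∧ t = x i - xL i}
      ∪ {t : ℝ | ∃ i, x i ≠ xU i ∧ t = xU i - x i} with hS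
  have hαS : α ∈ S := Or.inl (Or.inl rfl)
  have hSne : S.Nonempty := ⟨α, hαS⟩
  have hSfin : S.Finite := by
    apply Set.Finite.subset (Set.Finite.union
      (Set.Finite.insert α (Set.finite_range (fun i => x i - xL i)))
      (Set.finite_range (fun i => xU i - x i)))
    rintro t ((ht | ⟨i, _, rfl⟩) | ⟨i, _, rfl⟩)
    · exact Or.inl (Or.inl ht)
    · exact Or.inl (Or.inr ⟨i, rfl⟩)
    · exact Or.inr ⟨i, rfl⟩
  have hSpos : ∀ t ∈ S, 0 < t := by
    rintro t ((ht | ⟨i, hi, rfl⟩) | ⟨i, hi, rfl⟩)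
    · exact ht ▸ hα
    · exact sub_pos.2 (lt_of_le_of_ne (hxL i) (Ne.symm hi))
    · exact sub_pos.2 (lt_of_le_of_ne (hxU i) hi)
  have hδmem : δ ∈ S := hδ ▸ Set.Nonempty.csInf_mem hSne hSfin
  have hδpos : 0 < δ := hSpos δ hδmem
  have hδle : ∀ t ∈ S, δ ≤ t := fun t ht => hδ ▸ csInf_le hSfin.bddBelow ht
  have hδα : δ ≤ α := hδle α hαS
  constructor
  · intro i
    constructor
    · intro j
      simp only [PiLp.add_apply, PiLp.smul_apply, EuclideanSpace.single_apply, smul_eq_mul]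
      by_cases hji : j = i
      · subst hji
        have h1 : αpos j ≤ xU j - x j := by rw [hαpos]; exact min_le_right _ _
        simp only [eq_self_iff_true, if_true, mul_one]
        exact ⟨by linarith [hxL j, hαposnn j], by linarith⟩
      · simp only [if_neg hji, mul_zero, add_zero]; exact hx j
    · intro j
      simp only [PiLp.add_apply, PiLp.neg_apply, PiLp.smul_apply,
        EuclideanSpace.single_apply, smul_eq_mul]
      by_cases hji : j = i
      · subst hji
        have h1 : αneg j ≤ x j - xL j := by rw [hαneg]; exact min_le_right _ _
        simp only [eq_self_iff_true, if_true, mul_one]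
        exact ⟨by linarith, by linarith [hxU j, hαnegnn j]⟩
      · simp only [if_neg hji, mul_zero, neg_zero, add_zero]; exact hx j
  · intro v hxv hvα
    simp only [Set.mem_setOf_eq, PiLp.add_apply] at hxv
    have hvabs : ∀ i, |v i| ≤ α := fun i => (euclid_abs_coord_le_norm v i).trans hvα
    -- positivity of the relevant scalings and δ bounds
    have hαpospos : ∀ i, 0 < v i → 0 < αpos i := by
      intro i hvi
      rw [hαpos]
      exact lt_min hα (by linarith [(hxv i).2])
    have hαnegpos : ∀ i, v i < 0 → 0 < αneg i := by
      intro i hvi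
      rw [hαneg]
      exact lt_min hα (by linarith [(hxv i).1])
    have hδαpos : ∀ i, 0 < v i → δ ≤ αpos i := by
      intro i hvi
      rw [hαpos]
      refine le_min hδα (hδle _ (Or.inr ⟨i, ?_, rfl⟩))
      have : x i < xU i := by linarith [(hxv i).2]
      exact ne_of_lt this
    have hδαneg : ∀ i, v i < 0 → δ ≤ αneg i := by
      intro i hvi
      rw [hαneg]
      refine le_min hδα (hδle _ (Or.inl (Or.inr ⟨i, ?_, rfl⟩)))
      have : xL i < x i := by linarith [(hxv i).1]
      exact (ne_of_lt this).symm
    -- the coefficients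
    refine ⟨fun i => if 0 < v i then v i / αpos i else 0,
            fun i => if v i < 0 then -v i / αneg i else 0, ?_, ?_, ?_, ?_⟩
    · intro i
      by_cases h : 0 < v i
      · simp only [if_pos h]; exact div_nonneg h.le (hαposnn i)
      · simp [if_neg h]
    · intro i
      by_cases h : v i < 0
      · simp only [if_pos h]; exact div_nonneg (by linarith) (hαnegnn i)
      · simp [if_neg h]
    · -- the identity
      ext j
      rw [PiLp.add_apply, WithLp.ofLp_sum, WithLp.ofLp_sum, Finset.sum_apply j Finset.univ _, Finset.sum_apply j Finset.univ _]
      simp only [PiLp.smul_apply, PiLp.neg_apply, EuclideanSpace.single_apply, smul_eq_mul,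
        mul_ite, mul_one, mul_zero, mul_neg, Finset.sum_neg_distrib, Finset.sum_ite_eq,
        Finset.mem_univ, if_true]
      rcases lt_trichotomy (v j) 0 with h | h | h
      · rw [if_neg (not_lt.2 h.le), if_pos h, zero_mul, zero_add,
          div_mul_cancel₀ _ (hαnegpos j h).ne', neg_neg]
      · rw [if_neg (not_lt.2 h.le), if_neg (not_lt.2 h.ge)]
        simp [h]
      · rw [if_pos h, if_neg (not_lt.2 h.le), div_mul_cancel₀ _ (hαpospos j h).ne']
        simp
    · -- the Λ bound
      rw [hΛ]
      apply le_min
      · calc ∑ i, ((if 0 < v i then v i / αpos i else 0) + (if v i < 0 then -v i / αneg i else 0))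
            ≤ ∑ _i : Fin n, (1:ℝ) := by
              apply Finset.sum_le_sum
              intro i _
              rcases lt_trichotomy (v i) 0 with h | h | h
              · rw [if_neg (not_lt.2 h.le), if_pos h, zero_add]
                rw [div_le_one (hαnegpos i h)]
                have h1 : αneg i ≥ min α (x i - xL i) := (hαneg i).ge
                have h2 : -v i ≤ α := by have := hvabs i; rw [abs_of_neg h] at this; linarith
                have h3 : -v i ≤ x i - xL i := by linarith [(hxv i).1]
                calc -v i ≤ min α (x i - xL i) := le_min h2 h3
                  _ ≤ αneg i := h1
              · rw [if_neg (not_lt.2 h.le), if_neg (not_lt.2 h.ge)]; norm_num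
              · rw [if_pos h, if_neg (not_lt.2 h.le), add_zero]
                rw [div_le_one (hαpospos i h)]
                have h2 : v i ≤ α := by have := hvabs i; rw [abs_of_pos h] at this; linarith
                have h3 : v i ≤ xU i - x i := by linarith [(hxv i).2]
                calc v i ≤ min α (xU i - x i) := le_min h2 h3
                  _ = αpos i := (hαpos i).symm
          _ = n := by simp
      · have hstep : ∀ i : Fin n,
            (if 0 < v i then v i / αpos i else 0) + (if v i < 0 then -v i / αneg i else 0)
              ≤ |v i| / δ := by
          intro i
          rcases lt_trichotomy (v i) 0 with h | h | h
          · rw [if_neg (not_lt.2 h.le), if_pos h, zero_add, abs_of_neg h]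
            exact div_le_div_of_nonneg_left (by linarith) hδpos (hδαneg i h)
          · rw [if_neg (not_lt.2 h.le), if_neg (not_lt.2 h.ge)]
            simp [h]
          · rw [if_pos h, if_neg (not_lt.2 h.le), add_zero, abs_of_pos h]
            exact div_le_div_of_nonneg_left h.le hδpos (hδαpos i h)
        calc ∑ i, ((if 0 < v i then v i / αpos i else 0) + (if v i < 0 then -v i / αneg i else 0))
            ≤ ∑ i, |v i| / δ := Finset.sum_le_sum fun i _ => hstep i
          _ = (∑ i, |v i|) / δ := by rw [Finset.sum_div]
          _ ≤ (Real.sqrt n * ‖v‖) / δ := by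
              gcongr
              exact euclid_sum_abs_le v
          _ ≤ Real.sqrt n * α / δ := by
              gcongr
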